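/- Let H be a graph with girth at least 5, and let G be obtained from H by replacing each vertex x with a clique U_x of size s ≥ 1, joining U_x and U_y by a complete bipartite graph minus a perfect matching whenever (x,y) is an edge of H, and with no edges between U_x and U_y otherwise. Then G is 2s-closed. -/

import Mathlib

open SimpleGraph

/-- A graph is `c`-closed if every pair of distinct non-adjacent vertices has
fewer than `c` common neighbors. -/
def IsCClosed {V : Type*} (G : SimpleGraph V) (c : ℕ) : Prop :=
  ∀ u v : V, u ≠ v → ¬G.Adj u v → (G.commonNeighbors u v).ncard < c

/-- `K` is a maximal clique of `G`. -/
def IsMaxClique {V : Type*} (G : SimpleGraph V) (K : Finset V) : Prop :=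
  G.IsClique ↑K ∧ ∀ t : Finset V, G.IsClique ↑t → K ⊆ t → K = t

/-- The lower-bound construction: replace each vertex `x` of `H` by a clique `U_x`
of size `s`, and join `U_x`, `U_y` by a complete bipartite graph minus a perfect
matching (vertices with the same `Fin s` index are matched) whenever `H.Adj x y`. -/
def blowup {W : Type*} (H : SimpleGraph W) (s : ℕ) : SimpleGraph (W × Fin s) where
  Adj a b := (a.1 = b.1 ∨ H.Adj a.1 b.1) ∧ a.2 ≠ b.2
  symm := ⟨fun a b h => ⟨h.1.imp Eq.symm (fun hh => hh.symm), h.2.symm⟩⟩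
  loopless := ⟨fun a h => h.2 rfl⟩

lemma noTri {W : Type*} {H : SimpleGraph W} (h5 : 5 ≤ H.egirth) {x y z : W}
    (hxy : H.Adj x y) (hyz : H.Adj y z) (hxz : H.Adj x z) : False := by
  rw [le_egirth] at h5
  have hc : (Walk.cons hxy (Walk.cons hyz (Walk.cons hxz.symm Walk.nil))).IsCycle := by
    simp [Walk.isCycle_def, Walk.isTrail_def, hxy.ne, hyz.ne, hxz.ne, hxy.ne',
      hyz.ne', hxz.ne', Sym2.eq, Sym2.rel_iff']
  have := h5 x _ hc
  simp [Walk.length_cons] at this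
  norm_num at this

lemma uniqCN {W : Type*} {H : SimpleGraph W} (h5 : 5 ≤ H.egirth) {x y w₁ w₂ : W}
    (hxy : x ≠ y) (h1 : H.Adj x w₁) (h2 : H.Adj y w₁) (h3 : H.Adj x w₂)
    (h4 : H.Adj y w₂) : w₁ = w₂ := by
  by_contra hne
  rw [le_egirth] at h5
  have hc : (Walk.cons h1 (Walk.cons h2.symm (Walk.cons h4
      (Walk.cons h3.symm Walk.nil)))).IsCycle := by
    simp [Walk.isCycle_def, Walk.isTrail_def, h1.ne, h2.ne, h3.ne, h4.ne, h1.ne',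
      h2.ne', h3.ne', h4.ne', hxy, hne, Sym2.eq, Sym2.rel_iff']
    aesop
  have := h5 x _ hc
  simp [Walk.length_cons] at this
  norm_num at this

lemma ncard_compl_singleton {s : ℕ} (i : Fin s) : ({i}ᶜ : Set (Fin s)).ncard = s - 1 := by
  rw [Set.compl_eq_univ_diff, Set.ncard_diff_singleton_of_mem (Set.mem_univ i),
    Set.ncard_univ, Nat.card_eq_fintype_card, Fintype.card_fin]

theorem stmt16 {W : Type*} [Fintype W] (H : SimpleGraph W) (h5 : 5 ≤ H.egirth)
    (s : ℕ) (hs : 1 ≤ s) : IsCClosed (blowup H s) (2 * s) := by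
  rintro ⟨x, i⟩ ⟨y, j⟩ huv hnadj
  set N := (blowup H s).commonNeighbors (x, i) (y, j) with hN
  have hmem : ∀ z k, (z, k) ∈ N ↔
      ((x = z ∨ H.Adj x z) ∧ i ≠ k) ∧ ((y = z ∨ H.Adj y z) ∧ j ≠ k) := by
    intro z k
    simp [hN, commonNeighbors, blowup]
  -- key case: x ≠ y and ¬ H.Adj x y : common neighbors lie in a single column
  have key : x ≠ y → ¬ H.Adj x y → N.ncard < 2 * s := by
    intro hxy hnxy
    rcases N.eq_empty_or_nonempty with he | ⟨⟨z₀, k₀⟩, hz₀⟩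
    · rw [he]; simpa using by omega
    have hadj : ∀ z k, (z, k) ∈ N → H.Adj x z ∧ H.Adj y z := by
      intro z k hzk
      obtain ⟨⟨hz1, _⟩, ⟨hz2, _⟩⟩ := (hmem z k).mp hzk
      rcases hz1 with rfl | hz1
      · rcases hz2 with rfl | hz2
        · exact absurd rfl hxy
        · exact absurd hz2.symm hnxy
      · rcases hz2 with rfl | hz2
        · exact absurd hz1 hnxy
        · exact ⟨hz1, hz2⟩
    obtain ⟨ha0, hb0⟩ := hadj z₀ k₀ hz₀
    have hsub : N ⊆ (fun k => (z₀, k)) '' Set.univ := by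
      rintro ⟨z, k⟩ hzk
      obtain ⟨ha, hb⟩ := hadj z k hzk
      have : z = z₀ := uniqCN h5 hxy ha hb ha0 hb0
      exact ⟨k, Set.mem_univ k, by simp [this]⟩
    calc N.ncard ≤ ((fun k => (z₀, k)) '' Set.univ).ncard :=
          Set.ncard_le_ncard hsub (Set.toFinite _)
      _ = (Set.univ : Set (Fin s)).ncard :=
          Set.ncard_image_of_injective _ (fun a b h => by simpa using h)
      _ = s := by rw [Set.ncard_univ, Nat.card_eq_fintype_card, Fintype.card_fin]
      _ < 2 * s := by omega
  simp only [blowup, ne_eq, not_and, not_not] at hnadj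
  by_cases hij : i = j
  · subst hij
    have hxy : x ≠ y := fun h => huv (by simp [h])
    by_cases hnxy : H.Adj x y
    · -- common neighbors lie in columns x and y, rows ≠ i
      have hsub : N ⊆ (fun k => ((x : W), k)) '' ({i}ᶜ) ∪ (fun k => (y, k)) '' ({i}ᶜ) := by
        rintro ⟨z, k⟩ hzk
        obtain ⟨⟨hz1, hk1⟩, ⟨hz2, hk2⟩⟩ := (hmem z k).mp hzk
        rcases hz1 with rfl | hz1
        · exact Or.inl ⟨k, by simpa using (Ne.symm hk1), rfl⟩
        · rcases hz2 with rfl | hz2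
          · exact Or.inr ⟨k, by simpa using (Ne.symm hk2), rfl⟩
          · exact absurd (noTri h5 hnxy hz2 hz1) id
      have h1 : ((fun k => ((x : W), k)) '' ({i}ᶜ : Set (Fin s))).ncard = s - 1 := by
        rw [Set.ncard_image_of_injective _ (fun a b h => by simpa using h),
          ncard_compl_singleton]
      have h2 : ((fun k => ((y : W), k)) '' ({i}ᶜ : Set (Fin s))).ncard = s - 1 := by
        rw [Set.ncard_image_of_injective _ (fun a b h => by simpa using h),
          ncard_compl_singleton]
      calc N.ncard ≤ _ := Set.ncard_le_ncard hsub (Set.toFinite _)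
        _ ≤ _ := Set.ncard_union_le _ _
        _ < 2 * s := by rw [h1, h2]; omega
    · exact key hxy hnxy
  · -- i ≠ j : non-adjacency forces x ≠ y and ¬ H.Adj x y
    have h1 := hnadj
    have hxyeq : ¬ (x = y ∨ H.Adj x y) := fun h => hij (hnadj h)
    push_neg at hxyeq
    exact key hxyeq.1 hxyeq.2
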